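/- Let B be a finitely generated commutative k-algebra on which H acts by k-algebra automorphisms such that every element of B lies in a finite-dimensional H-stable k-subspace. Let H act on B[M_{n,d}] by acting on coefficients through B and substituting X(i,q) ↦ Σ_s (h⁻¹)(i,s)·X(s,q), let GL_d(k) act B-linearly by substituting X(i,q) ↦ Σ_s X(i,s)·g(s,q), and let j : B[M_{n,n}] → B[M_{n,d}] be the B-algebra embedding X(i,q) ↦ X(i,q). For x ∈ Matrix (Fin n) (Fin d) k and a k-algebra homomorphism z : B → k, let ev_{(x,z)} : B[M_{n,d}] → k be evaluation applying z to coefficients and sending X(i,q) to x i q. Then for all (x,z) and (y,z'): if some F ∈ ^H B[M_{n,d}] satisfies ev_{(x,z)}(F) ≠ ev_{(y,z')}(F), then some f in the k-subalgebra generated by all g * (j f₀) with g ∈ GL_d(k), f₀ ∈ ^H B[M_{n,n}], satisfies ev_{(x,z)}(f) ≠ ev_{(y,z')}(f). (Theorem 7.) -/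

import Mathlib

open MvPolynomial

/-- The `B`-linear action of `g ∈ GL_d(k)` on `B[M_{n,d}]`, substituting
`X(i,q) ↦ Σ_s X(i,s)·g(s,q)`. -/
noncomputable def colActB {k B : Type*} [Field k] [CommRing B] [Algebra k B]
    {n d : ℕ} (g : GL (Fin d) k) :
    MvPolynomial (Fin n × Fin d) B →ₐ[B] MvPolynomial (Fin n × Fin d) B :=
  aeval fun p => ∑ s : Fin d,
    X (p.1, s) * C (algebraMap k B ((g : Matrix (Fin d) (Fin d) k) s p.2))

/-- The action of `h ∈ H` on `B[M_{n,d}]`: apply `ρ h` to the coefficients and substitute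
`X(i,q) ↦ Σ_s (h⁻¹)(i,s)·X(s,q)`. -/
noncomputable def rowActB {k B : Type*} [Field k] [CommRing B] [Algebra k B]
    {n d : ℕ} (H : Subgroup (GL (Fin n) k)) (ρ : H →* (B ≃ₐ[k] B)) (h : H) :
    MvPolynomial (Fin n × Fin d) B →+* MvPolynomial (Fin n × Fin d) B :=
  eval₂Hom (C.comp ((ρ h : B ≃ₐ[k] B) : B →+* B))
    (fun p => ∑ s : Fin n,
      C (algebraMap k B ((((h⁻¹ : H) : GL (Fin n) k) : Matrix (Fin n) (Fin n) k) p.1 s))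
        * X (s, p.2))

/-- The `B`-algebra embedding `j : B[M_{n,n}] → B[M_{n,d}]`, `X(i,q) ↦ X(i,q)`. -/
noncomputable def jmapB {k B : Type*} [Field k] [CommRing B] [Algebra k B]
    {n d : ℕ} (hnd : n ≤ d) :
    MvPolynomial (Fin n × Fin n) B →ₐ[B] MvPolynomial (Fin n × Fin d) B :=
  aeval fun p => X (p.1, Fin.castLE hnd p.2)

set_option synthInstance.maxHeartbeats 1000000
set_option maxHeartbeats 1000000

section AuxMv


variable {k B : Type*} [Field k] [CommRing B] [Algebra k B] {n d : ℕ}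

/-- substitution `X(i,q) ↦ Σ_t X(i,t)·b(t,q)` from `B[M_{n,d}]` to `B[M_{n,n}]`. -/
noncomputable def psiB (b : Matrix (Fin n) (Fin d) k) :
    MvPolynomial (Fin n × Fin d) B →+* MvPolynomial (Fin n × Fin n) B :=
  eval₂Hom C (fun p => ∑ t : Fin n, X (p.1, t) * C (algebraMap k B (b t p.2)))

lemma rowActB_psiB (H : Subgroup (GL (Fin n) k)) (ρ : H →* (B ≃ₐ[k] B)) (h : H)
    (b : Matrix (Fin n) (Fin d) k) (F : MvPolynomial (Fin n × Fin d) B) :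
    rowActB H ρ h (psiB (B := B) b F) = psiB b (rowActB H ρ h F) := by
  have key : (rowActB (d := n) H ρ h).comp (psiB (B := B) b) =
      (psiB (B := B) b).comp (rowActB (d := d) H ρ h) := by
    apply MvPolynomial.ringHom_ext
    · intro c
      simp [psiB, rowActB]
    · rintro ⟨i, q⟩
      simp only [RingHom.coe_comp, Function.comp_apply, psiB, rowActB, coe_eval₂Hom,
        eval₂_X, map_sum, map_mul, eval₂_C, RingHom.coe_comp, AlgEquiv.commutes,
        AlgEquiv.coe_ringHom_commutes]
      simp only [eval₂_sum, eval₂_mul, eval₂_C, eval₂_X]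
      simp only [Finset.sum_mul, Finset.mul_sum, mul_assoc, RingHom.comp_apply,
        RingHom.coe_coe, AlgEquiv.commutes]
      exact Finset.sum_comm
  exact RingHom.congr_fun key F

lemma key_eval (hnd : n ≤ d) (z : B →ₐ[k] k) (x : Matrix (Fin n) (Fin d) k)
    (g : GL (Fin d) k) (b : Matrix (Fin n) (Fin d) k) (F : MvPolynomial (Fin n × Fin d) B) :
    eval₂ (z : B →+* k) (fun p => x p.1 p.2) (colActB g (jmapB (k := k) hnd (psiB (B := B) b F))) =
    eval₂ (z : B →+* k)
      (fun p => ∑ t : Fin n,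
        (∑ s : Fin d, x p.1 s * (g : Matrix (Fin d) (Fin d) k) s (Fin.castLE hnd t)) * b t p.2) F := by
  have key : (eval₂Hom (z : B →+* k) (fun p : Fin n × Fin d => x p.1 p.2)).comp
      (((colActB g).toRingHom.comp (jmapB (k := k) (B := B) hnd).toRingHom).comp (psiB b)) =
      eval₂Hom (z : B →+* k) (fun p : Fin n × Fin d => ∑ t : Fin n,
        (∑ s : Fin d, x p.1 s * (g : Matrix (Fin d) (Fin d) k) s (Fin.castLE hnd t)) * b t p.2) := by
    apply MvPolynomial.ringHom_ext
    · intro c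
      simp [psiB, colActB, jmapB]
    · rintro ⟨i, q⟩
      simp only [RingHom.coe_comp, Function.comp_apply, psiB, colActB, jmapB, coe_eval₂Hom,
        eval₂_X, map_sum, map_mul, eval₂_C, AlgHom.toRingHom_eq_coe, AlgHom.coe_toRingHom,
        aeval_X, aeval_C, MvPolynomial.algebraMap_eq, AlgHom.commutes]
      simp only [eval₂_sum, eval₂_mul, eval₂_C, eval₂_X, AlgHom.commutes]
      simp only [RingHom.coe_coe, AlgHom.commutes, Algebra.algebraMap_self, RingHom.id_apply]
  exact RingHom.congr_fun key F


end AuxMv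

section AuxLA

variable {k : Type*} [Field k] {n d : ℕ}

/-- Factor a matrix of rank ≤ n through the first n columns of an invertible matrix. -/
lemma exists_fact (hnd : n ≤ d) (g : Matrix (Fin d) (Fin d) k) (hg : g.rank ≤ n) :
    ∃ (u : GL (Fin d) k) (b : Matrix (Fin n) (Fin d) k),
      ∀ s q, ∑ t : Fin n, (u : Matrix (Fin d) (Fin d) k) s (Fin.castLE hnd t) * b t q
        = g s q := by
  classical
  set W : Submodule k (Fin d → k) := LinearMap.range g.mulVecLin with hW
  have hr : Module.finrank k W ≤ n := by
    unfold Matrix.rank at hg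
    exact hg
  set r : ℕ := Module.finrank k W with hrdef
  obtain ⟨K, hK⟩ := Submodule.exists_isCompl W
  set s' : ℕ := Module.finrank k K with hsdef
  have hds : r + s' = d := by
    have h1 := Submodule.finrank_add_eq_of_isCompl hK
    simpa using h1
  have bW : Module.Basis (Fin r) k W := Module.finBasis k W
  have bK : Module.Basis (Fin s') k K := Module.finBasis k K
  set v : Fin r → (Fin d → k) := fun t => (bW t : Fin d → k) with hv_def
  set vK : Fin s' → (Fin d → k) := fun t => (bK t : Fin d → k) with hvK_def
  have hv : LinearIndependent k v := bW.linearIndependent.map' W.subtype W.ker_subtype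
  have hvK : LinearIndependent k vK := bK.linearIndependent.map' K.subtype K.ker_subtype
  have hvsp : Submodule.span k (Set.range v) = W := by
    have : Set.range v = W.subtype '' (Set.range bW) := by
      rw [← Set.range_comp]; rfl
    rw [this, Submodule.span_image, bW.span_eq, Submodule.map_top, Submodule.range_subtype]
  have hvKsp : Submodule.span k (Set.range vK) = K := by
    have : Set.range vK = K.subtype '' (Set.range bK) := by
      rw [← Set.range_comp]; rfl
    rw [this, Submodule.span_image, bK.span_eq, Submodule.map_top, Submodule.range_subtype]
  set e : Fin d → Fin r ⊕ Fin s' := fun j => finSumFinEquiv.symm (Fin.cast hds.symm j) with he_def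
  set c : Fin d → (Fin d → k) := fun j => Sum.elim v vK (e j) with hc_def
  have hli : LinearIndependent k c := by
    have h1 : LinearIndependent k (Sum.elim v vK) := by
      refine hv.sum_type hvK ?_
      rw [hvsp, hvKsp]; exact hK.disjoint
    exact h1.comp e ((finSumFinEquiv.symm.injective).comp ((finCongr hds.symm).injective))
  have hsp : ⊤ ≤ Submodule.span k (Set.range c) := by
    have hre : Set.range c = Set.range (Sum.elim v vK) := by
      show Set.range ((Sum.elim v vK) ∘ e) = _
      rw [Set.range_comp]
      have : Set.range e = Set.univ := by
        apply Set.range_eq_univ.mpr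
        exact (finSumFinEquiv.symm.surjective).comp ((finCongr hds.symm).surjective)
      rw [this, Set.image_univ]
    rw [hre, Set.Sum.elim_range, Submodule.span_union, hvsp, hvKsp, hK.sup_eq_top]
  set Bc : Module.Basis (Fin d) k (Fin d → k) := Module.Basis.mk hli hsp with hBc
  set A : Matrix (Fin d) (Fin d) k := (Pi.basisFun k (Fin d)).toMatrix Bc with hA_def
  have hA : ∀ i j, A i j = Bc j i := by
    intro i j
    simp [hA_def, Module.Basis.toMatrix_apply, Pi.basisFun_repr]
  have : Invertible A := (Pi.basisFun k (Fin d)).invertibleToMatrix Bc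
  let u : GL (Fin d) k := unitOfInvertible A
  have hcol : ∀ q : Fin d, (fun i => g i q) ∈ W := by
    intro q
    refine ⟨Pi.single q 1, ?_⟩
    funext i
    simp [Matrix.mulVecLin_apply, Matrix.mulVec_single]
  set b : Matrix (Fin n) (Fin d) k := Matrix.of (fun t q =>
    if h : (t : ℕ) < r then bW.repr ⟨fun i => g i q, hcol q⟩ ⟨t, h⟩ else 0) with hb_def
  refine ⟨u, b, ?_⟩
  intro s q
  have hrn : r ≤ n := hr
  have hexp : ∑ t : Fin r, bW.repr ⟨fun i => g i q, hcol q⟩ t • v t = fun i => g i q := by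
    have h1 := bW.sum_repr ⟨fun i => g i q, hcol q⟩
    have h2 := congrArg (Subtype.val : W → (Fin d → k)) h1
    simpa only [hv_def, Submodule.coe_sum, Submodule.coe_smul] using h2
  have hsub : ∑ t : Fin n, (u : Matrix (Fin d) (Fin d) k) s (Fin.castLE hnd t) * b t q
      = ∑ t : Fin r,
        (u : Matrix (Fin d) (Fin d) k) s (Fin.castLE hnd (Fin.castLE hrn t)) * b (Fin.castLE hrn t) q := by
    have h3 : ∑ t : Fin n, (u : Matrix (Fin d) (Fin d) k) s (Fin.castLE hnd t) * b t q
        = ∑ t ∈ Finset.univ.map (Fin.castLEEmb hrn),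
            (u : Matrix (Fin d) (Fin d) k) s (Fin.castLE hnd t) * b t q := by
      symm
      apply Finset.sum_subset (Finset.subset_univ _)
      intro t _ ht
      have hnlt : ¬ ((t : ℕ) < r) := by
        intro hlt
        apply ht
        simp only [Finset.mem_map, Finset.mem_univ, true_and]
        exact ⟨⟨t, hlt⟩, by ext; simp⟩
      simp [hb_def, hnlt]
    rw [h3, Finset.sum_map]
    simp only [Fin.castLEEmb_apply]
  rw [hsub]
  have hterm : ∀ t : Fin r,
      (u : Matrix (Fin d) (Fin d) k) s (Fin.castLE hnd (Fin.castLE hrn t)) * b (Fin.castLE hrn t) q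
      = bW.repr ⟨fun i => g i q, hcol q⟩ t • v t s := by
    intro t
    have hu : (u : Matrix (Fin d) (Fin d) k) = A := rfl
    have he1 : e (Fin.castLE hnd (Fin.castLE hrn t)) = Sum.inl t := by
      show finSumFinEquiv.symm (Fin.cast hds.symm (Fin.castLE hnd (Fin.castLE hrn t))) = Sum.inl t
      have h9 : Fin.cast hds.symm (Fin.castLE hnd (Fin.castLE hrn t)) = Fin.castAdd s' t := by
        ext; simp
      rw [h9, finSumFinEquiv_symm_apply_castAdd]
    have hBcc : Bc (Fin.castLE hnd (Fin.castLE hrn t)) = v t := by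
      have h8 : Bc (Fin.castLE hnd (Fin.castLE hrn t)) = c (Fin.castLE hnd (Fin.castLE hrn t)) := by
        rw [hBc, Module.Basis.coe_mk]
      rw [h8, show c (Fin.castLE hnd (Fin.castLE hrn t))
        = Sum.elim v vK (e (Fin.castLE hnd (Fin.castLE hrn t))) from rfl, he1]
      rfl
    have hbval : b (Fin.castLE hrn t) q = bW.repr ⟨fun i => g i q, hcol q⟩ t := by
      have hlt : ((Fin.castLE hrn t : Fin n) : ℕ) < r := t.isLt
      simp only [hb_def, Matrix.of_apply, dif_pos hlt]
      congr 1
    rw [hu, hA, hBcc, hbval, smul_eq_mul, mul_comm]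
  rw [Finset.sum_congr rfl (fun t _ => hterm t)]
  have := congrFun hexp s
  simpa using this


end AuxLA

section AuxPQ

variable {k : Type*} [Field k] {n d : ℕ}

lemma exists_pq (x y : Matrix (Fin n) (Fin d) k) :
    ∃ p q : Matrix (Fin d) (Fin d) k,
      x * p = x ∧ y * q = y ∧ x * q * p = x * q ∧ p.rank ≤ n ∧ q.rank ≤ n := by
  classical
  set Rx : Submodule k (Fin d → k) :=
    Submodule.span k (Set.range fun i : Fin n => (fun s => x i s)) with hRx_def
  set Ry : Submodule k (Fin d → k) :=
    Submodule.span k (Set.range fun i : Fin n => (fun s => y i s)) with hRy_def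
  have hxmem : ∀ i, (fun s => x i s) ∈ Rx := fun i =>
    Submodule.subset_span ⟨i, rfl⟩
  have hymem : ∀ i, (fun s => y i s) ∈ Ry := fun i =>
    Submodule.subset_span ⟨i, rfl⟩
  have hRxrk : Module.finrank k Rx ≤ n := by
    simpa [Set.finrank] using finrank_range_le_card (R := k) (fun i : Fin n => (fun s => x i s))
  have hRyrk : Module.finrank k Ry ≤ n := by
    simpa [Set.finrank] using finrank_range_le_card (R := k) (fun i : Fin n => (fun s => y i s))
  -- projection onto Rx
  obtain ⟨Kx, hKx⟩ := Submodule.exists_isCompl Rx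
  set πx : (Fin d → k) →ₗ[k] (Fin d → k) :=
    Rx.subtype ∘ₗ (Rx.projectionOnto Kx hKx) with hπx_def
  have hπx_mem : ∀ v, πx v ∈ Rx := fun v => ((Rx.projectionOnto Kx hKx) v).2
  have hπx_id : ∀ v ∈ Rx, πx v = v := by
    intro v hv
    have h5 : πx v = ((Rx.projectionOnto Kx hKx ((⟨v, hv⟩ : Rx) : Fin d → k)) : Fin d → k) := rfl
    rw [h5, Submodule.projectionOnto_apply_left hKx ⟨v, hv⟩]
  -- the complement C of Rx ⊓ Ry inside Rx
  set I : Submodule k (Fin d → k) := Rx ⊓ Ry with hI_def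
  obtain ⟨C', hC'⟩ := Submodule.exists_isCompl (I.comap Rx.subtype)
  set C : Submodule k (Fin d → k) := C'.map Rx.subtype with hC_def
  have hCRx : C ≤ Rx := Submodule.map_subtype_le Rx C'
  have hdecomp : ∀ v ∈ Rx, ∃ w ∈ I, ∃ c ∈ C, v = w + c := by
    intro v hv
    have h1 : (⟨v, hv⟩ : Rx) ∈ (I.comap Rx.subtype) ⊔ C' := by
      rw [hC'.sup_eq_top]; trivial
    obtain ⟨a, ha, b, hb, hab⟩ := Submodule.mem_sup.mp h1
    refine ⟨(a : Fin d → k), ha, (b : Fin d → k), ⟨b, hb, rfl⟩, ?_⟩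
    have := congrArg (Subtype.val : Rx → (Fin d → k)) hab
    simpa using this.symm
  have hCRy : ∀ v ∈ C, v ∈ Ry → v = 0 := by
    rintro v2 ⟨c, hc, rfl⟩ hvy
    have h1 : c ∈ (I.comap Rx.subtype) := by
      simp only [Submodule.mem_comap, hI_def, Submodule.mem_inf]
      exact ⟨c.2, hvy⟩
    have h2 : c ∈ (I.comap Rx.subtype) ⊓ C' := ⟨h1, hc⟩
    rw [hC'.inf_eq_bot] at h2
    have h3 : c = 0 := (Submodule.mem_bot k).mp h2
    rw [h3]; simp
  -- complement K of Ry containing C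
  obtain ⟨D, hD⟩ := Submodule.exists_isCompl (C ⊔ Ry)
  set K : Submodule k (Fin d → k) := C ⊔ D with hK_def
  have hKcompl : IsCompl Ry K := by
    constructor
    · rw [Submodule.disjoint_def]
      intro v hvy hvK
      obtain ⟨c, hc, e, he, hce⟩ := Submodule.mem_sup.mp hvK
      have hece : e = v - c := by rw [← hce]; abel
      have he2 : e ∈ (C ⊔ Ry) ⊓ D := by
        refine ⟨?_, he⟩
        rw [hece]
        exact Submodule.sub_mem _ (Submodule.mem_sup_right hvy) (Submodule.mem_sup_left hc)
      rw [hD.inf_eq_bot] at he2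
      have he0 : e = 0 := (Submodule.mem_bot k).mp he2
      have hvc : v = c := by rw [← hce, he0, add_zero]
      exact hvc ▸ hCRy c hc (hvc ▸ hvy)
    · rw [codisjoint_iff]
      have : Ry ⊔ K = (C ⊔ Ry) ⊔ D := by
        rw [hK_def, ← sup_assoc, sup_comm Ry C]
      rw [this, hD.sup_eq_top]
  set πy : (Fin d → k) →ₗ[k] (Fin d → k) :=
    Ry.subtype ∘ₗ (Ry.projectionOnto K hKcompl) with hπy_def
  have hπy_mem : ∀ v, πy v ∈ Ry := fun v => ((Ry.projectionOnto K hKcompl) v).2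
  have hπy_id : ∀ v ∈ Ry, πy v = v := by
    intro v hv
    have h5 : πy v = ((Ry.projectionOnto K hKcompl ((⟨v, hv⟩ : Ry) : Fin d → k)) : Fin d → k) := rfl
    rw [h5, Submodule.projectionOnto_apply_left hKcompl ⟨v, hv⟩]
  have hπy_C : ∀ v ∈ C, πy v = 0 := by
    intro v hv
    have hvK : v ∈ K := le_sup_left (α := Submodule k (Fin d → k)) hv
    have h5 : πy v = ((Ry.projectionOnto K hKcompl ((⟨v, hvK⟩ : K) : Fin d → k)) : Fin d → k) := rfl
    rw [h5, Submodule.projectionOnto_apply_right hKcompl ⟨v, hvK⟩]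
    rfl
  have hπy_Rx : ∀ v ∈ Rx, πy v ∈ Rx := by
    intro v hv
    obtain ⟨w, hw, c, hc, rfl⟩ := hdecomp v hv
    rw [map_add, hπy_id w hw.2, hπy_C c hc, add_zero]
    exact hw.1
  -- matrices
  set p : Matrix (Fin d) (Fin d) k := Matrix.transpose (LinearMap.toMatrix' πx) with hp_def
  set q : Matrix (Fin d) (Fin d) k := Matrix.transpose (LinearMap.toMatrix' πy) with hq_def
  have hmul : ∀ (π : (Fin d → k) →ₗ[k] (Fin d → k)) (w : Matrix (Fin n) (Fin d) k) (i : Fin n),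
      (w * (LinearMap.toMatrix' π).transpose) i = π (fun s => w i s) := by
    intro π w i
    funext q'
    conv_rhs => rw [← Matrix.toLin'_toMatrix' π]
    simp only [Matrix.toLin'_apply, Matrix.mulVec, Matrix.mul_apply, dotProduct,
      Matrix.transpose_apply, mul_comm]
  have hxp : x * p = x := by
    funext i q'
    have h6 := congrFun (hmul πx x i) q'
    rw [hp_def, h6, hπx_id _ (hxmem i)]
  have hyq : y * q = y := by
    funext i q'
    have h6 := congrFun (hmul πy y i) q'
    rw [hq_def, h6, hπy_id _ (hymem i)]
  have hxq_row : ∀ i, (x * q) i = πy (fun s => x i s) := by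
    intro i
    rw [hq_def]
    exact hmul πy x i
  have hxqp : x * q * p = x * q := by
    funext i q'
    have h6 := congrFun (hmul πx (x * q) i) q'
    rw [hp_def, h6]
    have h7 : (fun s => (x * q) i s) = πy (fun s => x i s) := hxq_row i
    rw [h7, hπx_id _ (hπy_Rx _ (hxmem i))]
    exact (congrFun (hxq_row i) q').symm
  have hrkp : p.rank ≤ n := by
    rw [hp_def, Matrix.rank_transpose]
    have h8 : (LinearMap.toMatrix' πx).mulVecLin = πx := by
      rw [← Matrix.toLin'_apply', Matrix.toLin'_toMatrix']
    unfold Matrix.rank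
    rw [h8]
    have h9 : LinearMap.range πx ≤ Rx := by
      rintro _ ⟨v, rfl⟩; exact hπx_mem v
    exact (Submodule.finrank_mono h9).trans hRxrk
  have hrkq : q.rank ≤ n := by
    rw [hq_def, Matrix.rank_transpose]
    have h8 : (LinearMap.toMatrix' πy).mulVecLin = πy := by
      rw [← Matrix.toLin'_apply', Matrix.toLin'_toMatrix']
    unfold Matrix.rank
    rw [h8]
    have h9 : LinearMap.range πy ≤ Ry := by
      rintro _ ⟨v, rfl⟩; exact hπy_mem v
    exact (Submodule.finrank_mono h9).trans hRyrk
  exact ⟨p, q, hxp, hyq, hxqp, hrkp, hrkq⟩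


end AuxPQ



/-- Theorem 7 (general `Z`, with `B = k[Z]` and points `(x,z)` of `M_{n,d} × Z`): if an
`H`-invariant of `B[M_{n,d}]` separates `(x,z)` and `(y,z')`, then some polarized invariant
already separates them. -/
theorem stmt7 {k B : Type*} [Field k] [IsAlgClosed k] [CommRing B] [Algebra k B]
    [Algebra.FiniteType k B] {n d : ℕ} (hn : 0 < n) (hnd : n ≤ d)
    (H : Subgroup (GL (Fin n) k)) (ρ : H →* (B ≃ₐ[k] B))
    (hloc : ∀ b : B, ∃ V : Submodule k B, FiniteDimensional k V ∧ b ∈ V ∧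
      ∀ h : H, ∀ v ∈ V, ρ h v ∈ V)
    (x y : Matrix (Fin n) (Fin d) k) (z z' : B →ₐ[k] k)
    (F : MvPolynomial (Fin n × Fin d) B)
    (hF : ∀ h : H, rowActB H ρ h F = F)
    (hsep : eval₂ (z : B →+* k) (fun p => x p.1 p.2) F ≠
      eval₂ (z' : B →+* k) (fun p => y p.1 p.2) F) :
    ∃ f ∈ Algebra.adjoin k
        {G : MvPolynomial (Fin n × Fin d) B | ∃ g : GL (Fin d) k,
          ∃ f₀ : MvPolynomial (Fin n × Fin n) B,
          (∀ h : H, rowActB H ρ h f₀ = f₀) ∧ G = colActB g (jmapB (k := k) hnd f₀)},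
      eval₂ (z : B →+* k) (fun p => x p.1 p.2) f ≠
        eval₂ (z' : B →+* k) (fun p => y p.1 p.2) f := by
  by_contra hcon
  push_neg at hcon
  -- notation for the two evaluation maps
  set e₁ : Matrix (Fin n) (Fin d) k → k :=
    fun w => eval₂ (z : B →+* k) (fun p => w p.1 p.2) F with he₁
  set e₂ : Matrix (Fin n) (Fin d) k → k :=
    fun w => eval₂ (z' : B →+* k) (fun p => w p.1 p.2) F with he₂
  -- step: any rank ≤ n substitution matrix gives equal evaluations
  have Estep : ∀ g : Matrix (Fin d) (Fin d) k, g.rank ≤ n → e₁ (x * g) = e₂ (y * g) := by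
    intro g hg
    obtain ⟨u, b, hub⟩ := exists_fact hnd g hg
    have hinv : ∀ h : H, rowActB H ρ h (psiB (B := B) b F) = psiB (B := B) b F := by
      intro h
      rw [rowActB_psiB, hF]
    have hmem : colActB u (jmapB (k := k) hnd (psiB (B := B) b F)) ∈
        Algebra.adjoin k
          {G : MvPolynomial (Fin n × Fin d) B | ∃ g : GL (Fin d) k,
            ∃ f₀ : MvPolynomial (Fin n × Fin n) B,
            (∀ h : H, rowActB H ρ h f₀ = f₀) ∧ G = colActB g (jmapB (k := k) hnd f₀)} :=
      Algebra.subset_adjoin ⟨u, psiB (B := B) b F, hinv, rfl⟩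
    have heq := hcon _ hmem
    rw [key_eval hnd z x u b F, key_eval hnd z' y u b F] at heq
    have hpt : ∀ w : Matrix (Fin n) (Fin d) k,
        (fun p : Fin n × Fin d => ∑ t : Fin n,
          (∑ s : Fin d, w p.1 s * (u : Matrix (Fin d) (Fin d) k) s (Fin.castLE hnd t)) * b t p.2)
        = fun p : Fin n × Fin d => (w * g) p.1 p.2 := by
      intro w
      funext p
      rw [Matrix.mul_apply]
      simp only [Finset.sum_mul, mul_assoc]
      rw [Finset.sum_comm]
      refine Finset.sum_congr rfl fun s _ => ?_
      rw [← Finset.mul_sum, hub s p.2]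
    rw [hpt x, hpt y] at heq
    exact heq
  obtain ⟨p, q, hxp, hyq, hxqp, hpr, hqr⟩ := exists_pq x y
  have hqpr : (q * p).rank ≤ n := (Matrix.rank_mul_le_left q p).trans hqr
  have hchain : e₁ x = e₂ y := by
    calc e₁ x = e₁ (x * p) := by rw [hxp]
    _ = e₂ (y * p) := Estep p hpr
    _ = e₂ (y * (q * p)) := by rw [← Matrix.mul_assoc, hyq]
    _ = e₁ (x * (q * p)) := (Estep (q * p) hqpr).symm
    _ = e₁ (x * q) := by rw [← Matrix.mul_assoc, hxqp]
    _ = e₂ (y * q) := Estep q hqr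
    _ = e₂ y := by rw [hyq]
  exact hsep hchain
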